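/- Truncating a Gröbner basis of a homogeneous ideal gives a truncated Gröbner basis of the truncated ideal: let the grading given by W be positive, let σ be a term ordering on ℕ^n, let G be a set of nonzero W-homogeneous polynomials generating an ideal I and forming a σ-Gröbner basis of I, i.e. for every nonzero v ∈ I there exists g ∈ G with deg_σ(g) ≤ deg_σ(v) componentwise. Fix D ∈ ℤ^m and let I' be the ideal generated by all W-homogeneous elements of I of W-degree ≤_Lex D. Then for every nonzero W-homogeneous v ∈ I' with deg_W(v) ≤_Lex D there exists g ∈ G whose W-degree is ≤_Lex D and such that deg_σ(g) ≤ deg_σ(v) componentwise. -/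

import Mathlib

open MvPolynomial

/-- The `W`-degree of an exponent vector `α ∈ ℕ^n`: `W·α = ∑ⱼ αⱼ w⁽ʲ⁾ ∈ ℤ^m`. -/
def wdeg {m n : ℕ} (W : Matrix (Fin m) (Fin n) ℤ) (α : Fin n →₀ ℕ) : Fin m → ℤ :=
  fun i => ∑ j, (α j : ℤ) * W i j

/-- A polynomial is `W`-homogeneous of degree `d ∈ ℤ^m` if every monomial in its support
has `W`-degree `d`. -/
def IsWHomogeneous {K : Type*} [CommSemiring K] {m n : ℕ} (W : Matrix (Fin m) (Fin n) ℤ)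
    (p : MvPolynomial (Fin n) K) (d : Fin m → ℤ) : Prop :=
  ∀ α ∈ p.support, wdeg W α = d

/-- The grading given by `W` is positive: the rows of `W` are `ℤ`-linearly independent,
no column of `W` is zero, and the first non-zero entry of each column of `W` is positive. -/
def PositiveGrading {m n : ℕ} (W : Matrix (Fin m) (Fin n) ℤ) : Prop :=
  LinearIndependent ℤ (fun i : Fin m => (fun j => W i j : Fin n → ℤ)) ∧
  (∀ j : Fin n, ∃ i : Fin m, W i j ≠ 0) ∧
  (∀ j : Fin n, ∃ i : Fin m, 0 < W i j ∧ ∀ i' < i, W i' j = 0)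

/-- The `σ`-degree (exponent of the `σ`-leading term) of a polynomial: the `σ`-largest
exponent vector in its support. -/
noncomputable def mdeg {K : Type*} [CommSemiring K] {n : ℕ} (σ : MonomialOrder (Fin n))
    (f : MvPolynomial (Fin n) K) : Fin n →₀ ℕ :=
  σ.toSyn.symm (f.support.sup fun α => σ.toSyn α)

lemma wdeg_add {m n : ℕ} (W : Matrix (Fin m) (Fin n) ℤ) (a b : Fin n →₀ ℕ) :
    wdeg W (a + b) = wdeg W a + wdeg W b := by
  funext i
  simp only [wdeg, Finsupp.add_apply, Pi.add_apply]
  rw [← Finset.sum_add_distrib]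
  congr 1; funext j; push_cast; ring

lemma wdeg_nonneg {m n : ℕ} (W : Matrix (Fin m) (Fin n) ℤ)
    (hW : ∀ j : Fin n, ∃ i : Fin m, 0 < W i j ∧ ∀ i' < i, W i' j = 0)
    (γ : Fin n →₀ ℕ) : 0 ≤ toLex (wdeg W γ) := by
  induction γ using Finsupp.induction with
  | zero =>
      have : wdeg W 0 = 0 := by funext i; simp [wdeg]
      rw [this]
      exact le_of_eq rfl
  | single_add a b f ha hb ih =>
      have hadd : toLex (wdeg W (Finsupp.single a b + f))
          = toLex (wdeg W (Finsupp.single a b)) + toLex (wdeg W f) := by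
        rw [wdeg_add]; rfl
      rw [hadd]
      refine add_nonneg ?_ ih
      have hsingle : wdeg W (Finsupp.single a b) = fun i => (b : ℤ) * W i a := by
        funext i
        simp only [wdeg]
        rw [Finset.sum_eq_single a]
        · simp
        · intro j _ hj; simp [Finsupp.single_apply, Ne.symm hj]
        · simp
      rw [hsingle]
      obtain ⟨i, hi, hi'⟩ := hW a
      refine le_of_lt ⟨i, fun i' hlt => by show (0:ℤ) = (b:ℤ) * W i' a; rw [hi' i' hlt, mul_zero], ?_⟩
      show (0 : ℤ) < (b : ℤ) * W i a
      exact mul_pos (by exact_mod_cast Nat.pos_of_ne_zero hb) hi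

lemma mdeg_mem_support {K : Type*} [CommSemiring K] {n : ℕ} (σ : MonomialOrder (Fin n))
    {f : MvPolynomial (Fin n) K} (hf : f ≠ 0) : mdeg σ f ∈ f.support := by
  have h : f.support.Nonempty := by
    rwa [Finset.nonempty_iff_ne_empty, Ne, MvPolynomial.support_eq_empty]
  obtain ⟨a, ha, hsup⟩ := Finset.exists_mem_eq_sup f.support h (fun α => σ.toSyn α)
  rw [mdeg, hsup]
  simpa using ha

/-- Truncating a Gröbner basis of a homogeneous ideal gives a truncated Gröbner basis of
the truncated ideal: if `G` is a `σ`-Gröbner basis of `I` consisting of nonzero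
`W`-homogeneous polynomials and `I\'` is the ideal generated by the `W`-homogeneous
elements of `I` of `W`-degree `≤_Lex D`, then every nonzero `W`-homogeneous `v ∈ I\'` of
`W`-degree `≤_Lex D` has its leading term divisible by the leading term of some `g ∈ G`
of `W`-degree `≤_Lex D`. -/
theorem stmt_8 {K : Type*} [Field K] {m n : ℕ} (W : Matrix (Fin m) (Fin n) ℤ)
    (hW : PositiveGrading W) (σ : MonomialOrder (Fin n))
    (G : Set (MvPolynomial (Fin n) K)) (hG0 : ∀ g ∈ G, g ≠ 0)
    (hGhom : ∀ g ∈ G, ∃ d : Fin m → ℤ, IsWHomogeneous W g d)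
    (hGB : ∀ v ∈ Ideal.span G, v ≠ 0 → ∃ g ∈ G, mdeg σ g ≤ mdeg σ v)
    (D : Fin m → ℤ) :
    ∀ v ∈ Ideal.span {u : MvPolynomial (Fin n) K |
        u ∈ Ideal.span G ∧ ∃ e : Fin m → ℤ, IsWHomogeneous W u e ∧ toLex e ≤ toLex D},
      v ≠ 0 → ∀ e : Fin m → ℤ, IsWHomogeneous W v e → toLex e ≤ toLex D →
      ∃ g ∈ G, (∃ dg : Fin m → ℤ, IsWHomogeneous W g dg ∧ toLex dg ≤ toLex D) ∧
        mdeg σ g ≤ mdeg σ v := by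
  intro v hv hv0 e hve heD
  have hvG : v ∈ Ideal.span G := by
    refine Ideal.span_le.mpr ?_ hv
    intro u hu; exact hu.1
  obtain ⟨g, hgG, hgle⟩ := hGB v hvG hv0
  obtain ⟨d, hgd⟩ := hGhom g hgG
  refine ⟨g, hgG, ⟨d, hgd, ?_⟩, hgle⟩
  -- show toLex d ≤ toLex D
  have hg0 : g ≠ 0 := hG0 g hgG
  have hβ : wdeg W (mdeg σ g) = d := hgd _ (mdeg_mem_support σ hg0)
  have hα : wdeg W (mdeg σ v) = e := hve _ (mdeg_mem_support σ hv0)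
  have hsplit : mdeg σ g + (mdeg σ v - mdeg σ g) = mdeg σ v :=
    add_tsub_cancel_of_le hgle
  have key : toLex d + toLex (wdeg W (mdeg σ v - mdeg σ g)) = toLex e := by
    rw [← hβ, ← hα, ← hsplit, wdeg_add, hsplit]; rfl
  have hnn := wdeg_nonneg W hW.2.2 (mdeg σ v - mdeg σ g)
  calc toLex d ≤ toLex d + toLex (wdeg W (mdeg σ v - mdeg σ g)) := le_add_of_nonneg_right hnn
    _ = toLex e := key
    _ ≤ toLex D := heD
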